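/- Let ζ : ℕ → ℝ be a sequence and define z(n) = Σ_{l=0}^{n} (n!/(n−l)!) · ζ(l). Then for every m ∈ ℕ and every n ∈ ℕ: (Δ^m z)(n) = Σ_{l=0}^{n} (n!/(n−l)!) · ((l+m)!/l!) · ζ(l+m). -/

import Mathlib

/-- The forward difference operator acting on sequences. -/
def fwdDiffSeq (u : ℕ → ℝ) : ℕ → ℝ := fun n => u (n + 1) - u n

/-- The m-th forward difference of an interpolating transform in terms of shifted
Fourier coefficients. -/
theorem fwdDiff_interpolating_transform (ζ z : ℕ → ℝ)
    (hz : ∀ n : ℕ, z n = ∑ l ∈ Finset.range (n + 1), (Nat.descFactorial n l : ℝ) * ζ l) :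
    ∀ m n : ℕ,
      (fwdDiffSeq^[m] z) n =
        ∑ l ∈ Finset.range (n + 1),
          (Nat.descFactorial n l : ℝ) * (Nat.descFactorial (l + m) m : ℝ) * ζ (l + m) := by
  intro m
  induction m with
  | zero =>
    intro n
    simp only [Function.iterate_zero, id_eq, Nat.descFactorial_zero, Nat.cast_one, mul_one,
      Nat.add_zero]
    rw [hz n]

  | succ m ih =>
    intro n
    rw [Function.iterate_succ_apply', fwdDiffSeq]

    rw [ih n, ih (n + 1)]
    -- extend the second sum to range (n+2) with a zero term
    have hzero : (Nat.descFactorial n (n + 1) : ℝ)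
        * (Nat.descFactorial ((n + 1) + m) m : ℝ) * ζ ((n + 1) + m) = 0 := by
      simp [Nat.descFactorial_eq_zero_iff_lt]
    have h2 : (∑ l ∈ Finset.range (n + 1),
        (Nat.descFactorial n l : ℝ) * (Nat.descFactorial (l + m) m : ℝ) * ζ (l + m))
        = ∑ l ∈ Finset.range (n + 2),
        (Nat.descFactorial n l : ℝ) * (Nat.descFactorial (l + m) m : ℝ) * ζ (l + m) := by
      rw [Finset.sum_range_succ (n := n + 1), hzero, add_zero]
    rw [h2, ← Finset.sum_sub_distrib]
    rw [Finset.sum_range_succ' (fun l => ((Nat.descFactorial (n+1) l : ℝ)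
        * (Nat.descFactorial (l + m) m : ℝ) * ζ (l + m)
        - (Nat.descFactorial n l : ℝ) * (Nat.descFactorial (l + m) m : ℝ) * ζ (l + m))) (n + 1)]
    simp only [Nat.descFactorial_zero, Nat.cast_one, one_mul, sub_self, add_zero]
    refine Finset.sum_congr rfl (fun l hl => ?_)
    have hln : l ≤ n := Nat.lt_succ_iff.mp (Finset.mem_range.mp hl)
    have hd1 : ((n + 1).descFactorial (l + 1) : ℝ) = (n + 1) * (n.descFactorial l : ℝ) := by
      rw [Nat.succ_descFactorial_succ]; push_cast; ring
    have hd2 : (n.descFactorial (l + 1) : ℝ) = ((n : ℝ) - l) * (n.descFactorial l : ℝ) := by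
      rw [Nat.descFactorial_succ]; push_cast [Nat.cast_sub hln]; ring
    have hd3 : ((l + (m + 1)).descFactorial (m + 1) : ℝ)
        = ((l : ℝ) + 1) * ((l + 1 + m).descFactorial m : ℝ) := by
      have : (l + (m + 1)).descFactorial (m + 1)
          = (l + (m + 1) - m) * (l + (m + 1)).descFactorial m := Nat.descFactorial_succ _ _
      rw [this]
      have h1 : l + (m + 1) - m = l + 1 := by omega
      have h2 : l + (m + 1) = l + 1 + m := by omega
      rw [h1, h2]; push_cast; ring
    have h3 : l + 1 + m = l + (m + 1) := by omega
    rw [hd1, hd2, hd3, h3]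
    ring
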